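/- For any ε > 0 small and any 2ε < δ̄ < 1, there exists C = C(δ̄) > 0 such that U(t + ε, z) ≤ (1 + Cε) U(t,z) for all (t,z) ∈ B̄₁ \ B_{δ̄} ⊂ ℝ². -/

import Mathlib

open Real

/-- The function `U(t,z) = r^{1/2} cos(θ/2)`. -/
noncomputable def U (p : ℝ × ℝ) : ℝ :=
  Real.sqrt (Real.sqrt (p.1 ^ 2 + p.2 ^ 2)) *
    Real.cos (Complex.arg (p.1 + p.2 * Complex.I) / 2)

lemma U_eq (p : ℝ × ℝ) :
    U p = Real.sqrt ((Real.sqrt (p.1 ^ 2 + p.2 ^ 2) + p.1) / 2) := by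
  unfold U
  rcases eq_or_ne p 0 with rfl | hp
  · simp
  · have hp' : p.1 ≠ 0 ∨ p.2 ≠ 0 := by
      by_contra h
      push_neg at h
      exact hp (Prod.ext h.1 h.2)
    have hz : (p.1 : ℂ) + p.2 * Complex.I ≠ 0 := by
      simp only [ne_eq, Complex.ext_iff, Complex.add_re, Complex.ofReal_re,
        Complex.mul_re, Complex.ofReal_im, Complex.I_re, Complex.I_im,
        Complex.add_im, Complex.mul_im, Complex.zero_re, Complex.zero_im]
      intro h
      rcases hp' with h1 | h2 <;> · simp at h; tauto
    have hsum : 0 < p.1 ^ 2 + p.2 ^ 2 := by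
      rcases hp' with h1 | h2 <;> positivity
    have hr : 0 < Real.sqrt (p.1 ^ 2 + p.2 ^ 2) := Real.sqrt_pos.mpr hsum
    have habs : ‖(p.1 : ℂ) + p.2 * Complex.I‖ =
        Real.sqrt (p.1 ^ 2 + p.2 ^ 2) := Complex.norm_add_mul_I p.1 p.2
    have hre : ((p.1 : ℂ) + p.2 * Complex.I).re = p.1 := by simp
    rw [Real.cos_half (Complex.neg_pi_lt_arg _).le (Complex.arg_le_pi _),
      Complex.cos_arg hz, habs, hre]
    rw [← Real.sqrt_mul hr.le]
    congr 1
    field_simp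

/-- For `0 < δ̄ < 1` there is `C = C(δ̄) > 0` such that for every `ε > 0` with `2ε < δ̄`,
`U(t + ε, z) ≤ (1 + Cε) U(t,z)` in `B̄₁ \ B_{δ̄} ⊂ ℝ²`. -/
theorem stmt14 (δ : ℝ) (hδ1 : δ < 1) :
    ∃ C : ℝ, 0 < C ∧ ∀ ε : ℝ, 0 < ε → 2 * ε < δ →
      ∀ p : ℝ × ℝ, p.1 ^ 2 + p.2 ^ 2 ≤ 1 → δ ≤ Real.sqrt (p.1 ^ 2 + p.2 ^ 2) →
        U (p.1 + ε, p.2) ≤ (1 + C * ε) * U p := by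
  refine ⟨max 1 (2 / δ), lt_of_lt_of_le one_pos (le_max_left _ _), ?_⟩
  intro ε hε hεδ p hp1 hpδ
  set C : ℝ := max 1 (2 / δ) with hC
  have hδ0 : 0 < δ := by linarith
  have hCδ : 2 ≤ C * δ := by
    have : 2 / δ ≤ C := le_max_right _ _
    calc 2 = (2 / δ) * δ := by field_simp
    _ ≤ C * δ := by nlinarith
  have hC0 : (0:ℝ) < C := lt_of_lt_of_le one_pos (le_max_left _ _)
  set t := p.1 with ht
  set z := p.2 with hz
  set B := Real.sqrt (t ^ 2 + z ^ 2) with hB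
  set A := Real.sqrt ((t + ε) ^ 2 + z ^ 2) with hA
  have hA0 : 0 ≤ A := Real.sqrt_nonneg _
  have hB2 : B ^ 2 = t ^ 2 + z ^ 2 := Real.sq_sqrt (by positivity)
  have hA2 : A ^ 2 = B ^ 2 + 2 * t * ε + ε ^ 2 := by
    rw [hB2, Real.sq_sqrt (by positivity)]; ring
  have htB : -B ≤ t := by
    have h1 : |t| ≤ B := by
      rw [hB, ← Real.sqrt_sq_eq_abs]
      exact Real.sqrt_le_sqrt (by nlinarith [sq_nonneg z])
    linarith [abs_le.mp h1 |>.1]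
  have hBt : 0 ≤ B + t := by linarith
  have hden : δ ≤ 2 * (A + B - ε) := by
    have : δ ≤ B := hpδ
    linarith
  have hid : (A + t + ε) * (A + B - ε) = (B + t) * (A + B + ε) := by
    linear_combination hA2
  have hD : 0 < A + B - ε := by linarith
  have h2 : 2 ≤ C * (2 * (A + B - ε)) := by nlinarith
  have key : A + t + ε ≤ (1 + C * ε) ^ 2 * (B + t) := by
    rw [← mul_le_mul_iff_left₀ hD, hid]
    nlinarith [mul_nonneg hBt (mul_nonneg hε.le (sub_nonneg.mpr h2)),
      mul_nonneg hBt (mul_nonneg (mul_nonneg (mul_nonneg hC0.le hC0.le)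
        (mul_nonneg hε.le hε.le)) hD.le)]
  have h1C : (0:ℝ) ≤ 1 + C * ε := by positivity
  have hUe : U (t + ε, z) = Real.sqrt ((A + (t + ε)) / 2) := by
    rw [U_eq]
  rw [hUe, U_eq]
  calc Real.sqrt ((A + (t + ε)) / 2)
      ≤ Real.sqrt ((1 + C * ε) ^ 2 * ((B + t) / 2)) :=
        Real.sqrt_le_sqrt (by nlinarith)
    _ = (1 + C * ε) * Real.sqrt ((B + t) / 2) := by
        rw [Real.sqrt_mul (sq_nonneg _), Real.sqrt_sq h1C]
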